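/- Let Qₑ ∈ SO(3) with Qₑ n₀ = d₃ and let Kᵉ = axl(Qₑᵀ Qₑ,_α) ⊗ a^α be the shell bending–curvature tensor, c the planar alternator, b = −Grad_s n₀, a the planar identity. Then Qₑᵀ Grad_s d₃ = c Kᵉ − b, where Grad_s f = f,_α ⊗ a^α. -/

import Mathlib

open Matrix

attribute [local instance] Matrix.normedAddCommGroup Matrix.normedSpace

/-- The axial vector of a (skew-symmetric) 3×3 real matrix. -/
noncomputable def axl (A : Matrix (Fin 3) (Fin 3) ℝ) : Fin 3 → ℝ :=
  ![A 2 1, A 0 2, A 1 0]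

/-- matrix-vector multiplication as a continuous bilinear map -/
noncomputable def mvCLM : Matrix (Fin 3) (Fin 3) ℝ →L[ℝ] (Fin 3 → ℝ) →L[ℝ] (Fin 3 → ℝ) :=
  LinearMap.toContinuousLinearMap
    ((LinearMap.toContinuousLinearMap.toLinearMap).comp (Matrix.toLin'.toLinearMap))

@[simp] lemma mvCLM_apply (M : Matrix (Fin 3) (Fin 3) ℝ) (v : Fin 3 → ℝ) :
    mvCLM M v = M *ᵥ v := rfl

/-- matrix multiplication as a continuous bilinear map -/
noncomputable def mulCLM :
    Matrix (Fin 3) (Fin 3) ℝ →L[ℝ] Matrix (Fin 3) (Fin 3) ℝ →L[ℝ] Matrix (Fin 3) (Fin 3) ℝ :=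
  LinearMap.toContinuousLinearMap
    ((LinearMap.toContinuousLinearMap.toLinearMap).comp
      (LinearMap.mul ℝ (Matrix (Fin 3) (Fin 3) ℝ)))

@[simp] lemma mulCLM_apply (M N : Matrix (Fin 3) (Fin 3) ℝ) :
    mulCLM M N = M * N := rfl

/-- transpose as a continuous linear map -/
noncomputable def tCLM : Matrix (Fin 3) (Fin 3) ℝ →L[ℝ] Matrix (Fin 3) (Fin 3) ℝ :=
  LinearMap.toContinuousLinearMap (Matrix.transposeLinearEquiv (Fin 3) (Fin 3) ℝ ℝ).toLinearMap

@[simp] lemma tCLM_apply (M : Matrix (Fin 3) (Fin 3) ℝ) : tCLM M = Mᵀ := rfl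

noncomputable instance matCLMNormedAddCommGroup :
    NormedAddCommGroup (Matrix (Fin 3) (Fin 3) ℝ →L[ℝ] Matrix (Fin 3) (Fin 3) ℝ) :=
  ContinuousLinearMap.toNormedAddCommGroup

noncomputable instance matCLMNormedSpace :
    NormedSpace ℝ (Matrix (Fin 3) (Fin 3) ℝ →L[ℝ] Matrix (Fin 3) (Fin 3) ℝ) :=
  ContinuousLinearMap.toNormedSpace

lemma mul_vecMulVec (M : Matrix (Fin 3) (Fin 3) ℝ) (u v : Fin 3 → ℝ) :
    M * vecMulVec u v = vecMulVec (M *ᵥ u) v := by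
  ext i j
  simp only [Matrix.mul_apply, vecMulVec_apply, mulVec, dotProduct, Finset.sum_mul]
  exact Finset.sum_congr rfl fun k _ => by ring

lemma vecMulVec_add_left (u w v : Fin 3 → ℝ) :
    vecMulVec (u + w) v = vecMulVec u v + vecMulVec w v := by
  ext i j; simp [vecMulVec_apply, add_mul]

lemma core (Q0 : Matrix (Fin 3) (Fin 3) ℝ) (hQ0 : Q0ᵀ * Q0 = 1) (hdet : Q0.det = 1)
    (A : Matrix (Fin 3) (Fin 3) ℝ) (hA : Aᵀ = -A) :
    A *ᵥ (Q0 *ᵥ (Pi.single 2 1)) =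
      (vecMulVec (Q0 *ᵥ Pi.single 0 1) (Q0 *ᵥ Pi.single 1 1)
        - vecMulVec (Q0 *ᵥ Pi.single 1 1) (Q0 *ᵥ Pi.single 0 1)) *ᵥ axl A := by
  have hadj : Q0.adjugate = Q0ᵀ := by
    calc Q0.adjugate = (Q0ᵀ * Q0) * Q0.adjugate := by rw [hQ0, one_mul]
    _ = Q0ᵀ * (Q0 * Q0.adjugate) := by rw [mul_assoc]
    _ = Q0ᵀ := by rw [Matrix.mul_adjugate, hdet, one_smul, mul_one]
  rw [Matrix.adjugate_fin_three] at hadj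
  have h20 : Q0 1 0 * Q0 2 1 - Q0 1 1 * Q0 2 0 = Q0 0 2 := by
    simpa using congrFun (congrFun hadj 2) 0
  have h21 : -(Q0 0 0 * Q0 2 1) + Q0 0 1 * Q0 2 0 = Q0 1 2 := by
    simpa using congrFun (congrFun hadj 2) 1
  have h22 : Q0 0 0 * Q0 1 1 - Q0 0 1 * Q0 1 0 = Q0 2 2 := by
    simpa using congrFun (congrFun hadj 2) 2
  have s00 : A 0 0 = -A 0 0 := by simpa using congrFun (congrFun hA 0) 0
  have s11 : A 1 1 = -A 1 1 := by simpa using congrFun (congrFun hA 1) 1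
  have s22 : A 2 2 = -A 2 2 := by simpa using congrFun (congrFun hA 2) 2
  have s01 : A 1 0 = -A 0 1 := by simpa using congrFun (congrFun hA 0) 1
  have s02 : A 2 0 = -A 0 2 := by simpa using congrFun (congrFun hA 0) 2
  have s12 : A 2 1 = -A 1 2 := by simpa using congrFun (congrFun hA 1) 2
  funext i
  fin_cases i
  · simp [mulVec, vecMulVec_apply, dotProduct, axl, Fin.sum_univ_three, Matrix.sub_apply,
      Pi.single_apply]
    linear_combination (Q0 0 2 / 2) * s00 + Q0 1 2 * s01 - A 0 2 * h22 + A 1 0 * h21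
  · simp [mulVec, vecMulVec_apply, dotProduct, axl, Fin.sum_univ_three, Matrix.sub_apply,
      Pi.single_apply]
    linear_combination -A 1 0 * h20 + (Q0 1 2 / 2) * s11 + A 2 1 * h22 + Q0 2 2 * s12
  · simp [mulVec, vecMulVec_apply, dotProduct, axl, Fin.sum_univ_three, Matrix.sub_apply,
      Pi.single_apply]
    linear_combination (Q0 2 2 / 2) * s22 + Q0 0 2 * s02 - A 2 1 * h21 + A 0 2 * h20

theorem stmt_19
    (n0 : (Fin 2 → ℝ) → (Fin 3 → ℝ))
    (Qe : (Fin 2 → ℝ) → Matrix (Fin 3) (Fin 3) ℝ)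
    (Q0 : Matrix (Fin 3) (Fin 3) ℝ)
    (x : Fin 2 → ℝ)
    (adual : Fin 2 → (Fin 3 → ℝ))
    (hQe : ∀ y, (Qe y)ᵀ * Qe y = 1 ∧ (Qe y).det = 1)
    (hQ0 : Q0ᵀ * Q0 = 1) (hQ0det : Q0.det = 1)
    (hQ0n : Q0.mulVec (Pi.single 2 1) = n0 x)
    (hn0unit : ∀ y, n0 y ⬝ᵥ n0 y = 1)
    (htangent : ∀ α : Fin 2, adual α ⬝ᵥ n0 x = 0)
    (hdn : DifferentiableAt ℝ n0 x)
    (hdQ : DifferentiableAt ℝ Qe x)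
    (d10 d20 : Fin 3 → ℝ)
    (hd10 : d10 = Q0.mulVec (Pi.single 0 1))
    (hd20 : d20 = Q0.mulVec (Pi.single 1 1))
    (c : Matrix (Fin 3) (Fin 3) ℝ) (hc : c = vecMulVec d10 d20 - vecMulVec d20 d10)
    (b : Matrix (Fin 3) (Fin 3) ℝ)
    (hbdef : b = -∑ α : Fin 2, vecMulVec (fderiv ℝ n0 x (Pi.single α 1)) (adual α))
    (Ke : Matrix (Fin 3) (Fin 3) ℝ)
    (hKe : Ke = ∑ α : Fin 2,
        vecMulVec (axl ((Qe x)ᵀ * fderiv ℝ Qe x (Pi.single α 1))) (adual α))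
    (d3f : (Fin 2 → ℝ) → (Fin 3 → ℝ)) (hd3f : d3f = fun y => (Qe y).mulVec (n0 y))
    (GradS : Matrix (Fin 3) (Fin 3) ℝ)
    (hGradS : GradS = ∑ α : Fin 2,
        vecMulVec (fderiv ℝ d3f x (Pi.single α 1)) (adual α)) :
    (Qe x)ᵀ * GradS = c * Ke - b := by
  have hQ'h : HasFDerivAt Qe (fderiv ℝ Qe x) x := hdQ.hasFDerivAt
  have hn'h : HasFDerivAt n0 (fderiv ℝ n0 x) x := hdn.hasFDerivAt
  -- derivative of d3f
  have hL : HasFDerivAt (fun y => mvCLM (Qe y)) (mvCLM.comp (fderiv ℝ Qe x)) x :=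
    mvCLM.hasFDerivAt.comp x hQ'h
  have hd3 : HasFDerivAt d3f
      ((mvCLM (Qe x)).comp (fderiv ℝ n0 x) + (mvCLM.comp (fderiv ℝ Qe x)).flip (n0 x)) x := by
    rw [hd3f]
    exact hL.clm_apply hn'h
  have hfd3 : ∀ v, fderiv ℝ d3f x v =
      (Qe x) *ᵥ (fderiv ℝ n0 x v) + (fderiv ℝ Qe x v) *ᵥ (n0 x) := by
    intro v
    rw [hd3.fderiv]
    simp
  -- skew-symmetry of (Qe x)ᵀ * Qe' v
  have hskew : ∀ v, ((Qe x)ᵀ * fderiv ℝ Qe x v)ᵀ = -((Qe x)ᵀ * fderiv ℝ Qe x v) := by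
    have hT : HasFDerivAt (fun y => (Qe y)ᵀ) (tCLM.comp (fderiv ℝ Qe x)) x :=
      tCLM.hasFDerivAt.comp x hQ'h
    have hM : HasFDerivAt (fun y => mulCLM ((Qe y)ᵀ))
        (mulCLM.comp (tCLM.comp (fderiv ℝ Qe x))) x :=
      mulCLM.hasFDerivAt.comp x hT
    have hprod : HasFDerivAt (fun y => (Qe y)ᵀ * Qe y)
        ((mulCLM ((Qe x)ᵀ)).comp (fderiv ℝ Qe x)
          + show (Fin 2 → ℝ) →L[ℝ] Matrix (Fin 3) (Fin 3) ℝ from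
            (mulCLM.comp (tCLM.comp (fderiv ℝ Qe x))).flip (Qe x)) x :=
      hM.clm_apply hQ'h
    have hconst : HasFDerivAt (fun y => (Qe y)ᵀ * Qe y)
        (0 : (Fin 2 → ℝ) →L[ℝ] Matrix (Fin 3) (Fin 3) ℝ) x := by
      have : (fun y => (Qe y)ᵀ * Qe y) = fun _ => (1 : Matrix (Fin 3) (Fin 3) ℝ) :=
        funext fun y => (hQe y).1
      rw [this]; exact hasFDerivAt_const _ _
    have h0 := hprod.unique hconst
    intro v
    have h0v := congrArg (fun (L : (Fin 2 → ℝ) →L[ℝ] Matrix (Fin 3) (Fin 3) ℝ) => L v) h0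
    simp only [ContinuousLinearMap.add_apply, ContinuousLinearMap.comp_apply,
      ContinuousLinearMap.flip_apply, mulCLM_apply, tCLM_apply,
      ContinuousLinearMap.zero_apply] at h0v
    have : (fderiv ℝ Qe x v)ᵀ * Qe x = -((Qe x)ᵀ * fderiv ℝ Qe x v) :=
      eq_neg_of_add_eq_zero_right h0v
    rw [Matrix.transpose_mul, Matrix.transpose_transpose, this]
  -- assemble
  rw [hGradS, hKe, hbdef, Finset.mul_sum, Finset.mul_sum, sub_neg_eq_add,
    ← Finset.sum_add_distrib]
  refine Finset.sum_congr rfl fun α _ => ?_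
  rw [_root_.mul_vecMulVec, _root_.mul_vecMulVec, hfd3, Matrix.mulVec_add, Matrix.mulVec_mulVec,
    Matrix.mulVec_mulVec, (hQe x).1, Matrix.one_mulVec]
  have hcore := core Q0 hQ0 hQ0det ((Qe x)ᵀ * fderiv ℝ Qe x (Pi.single α 1))
    (hskew (Pi.single α 1))
  rw [hQ0n, ← hd10, ← hd20, ← hc] at hcore
  rw [hcore, vecMulVec_add_left, add_comm]
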